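/- An A-bounded operator T is A-normaloid (r_A(T) = ‖T‖_A) if and only if ω_A(T) = ‖T‖_A; in that case r_A(T) = ω_A(T) = ‖T‖_A. -/

import Mathlib

open Filter

variable {H : Type*} [NormedAddCommGroup H] [InnerProductSpace ℂ H] [CompleteSpace H]

/-- The seminorm induced by a positive operator `A`: `‖x‖_A = ⟨Ax,x⟩^{1/2}`. -/
noncomputable def anorm (A : H →L[ℂ] H) (x : H) : ℝ :=
  Real.sqrt ((inner ℂ (A x) x : ℂ).re)

/-- `T` is `A`-bounded: there is `c > 0` with `‖Tx‖_A ≤ c‖x‖_A` for all `x`. -/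
def ABounded (A T : H →L[ℂ] H) : Prop :=
  ∃ c > 0, ∀ x : H, anorm A (T x) ≤ c * anorm A x

/-- The `A`-operator seminorm `‖T‖_A = sup{‖Tx‖_A : ‖x‖_A = 1}`. -/
noncomputable def opAnorm (A T : H →L[ℂ] H) : ℝ :=
  sSup {c : ℝ | ∃ x : H, anorm A x = 1 ∧ c = anorm A (T x)}

/-- The `A`-spectral radius `r_A(T) = inf_{n ≥ 1} ‖Tⁿ‖_A^{1/n}`. -/
noncomputable def rA (A T : H →L[ℂ] H) : ℝ :=
  ⨅ n : ℕ+, opAnorm A (T ^ (n : ℕ)) ^ (((n : ℕ) : ℝ)⁻¹)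

/-- The `A`-numerical radius `ω_A(T) = sup{|⟨Tx,x⟩_A| : ‖x‖_A = 1}`. -/
noncomputable def wA (A T : H →L[ℂ] H) : ℝ :=
  sSup {c : ℝ | ∃ x : H, anorm A x = 1 ∧ c = ‖(inner ℂ (A (T x)) x : ℂ)‖}


set_option linter.unusedSectionVars false
set_option maxHeartbeats 1000000
open ContinuousLinearMap


lemma herm_cs (f : H → H → ℂ)
    (herm : ∀ x y, f x y = starRingEnd ℂ (f y x))
    (addr : ∀ x y z, f x (y + z) = f x y + f x z)
    (smulr : ∀ (c : ℂ) (x y : H), f x (c • y) = c * f x y)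
    (pos : ∀ x, 0 ≤ (f x x).re) (x y : H) :
    ‖(f x y)‖ ≤ Real.sqrt (f x x).re * Real.sqrt (f y y).re := by
  have addl : ∀ x y z : H, f (x + y) z = f x z + f y z := by
    intro a b z
    rw [herm (a+b) z, addr, map_add, ← herm, ← herm]
  have smull : ∀ (c : ℂ) (x y : H), f (c • x) y = starRingEnd ℂ c * f x y := by
    intro c a b
    rw [herm (c • a) b, smulr, map_mul, ← herm]
  set a := (f x x).re with ha
  set b := (f y y).re with hb
  have hane : 0 ≤ a := pos x
  have hbne : 0 ≤ b := pos y
  set m := ‖(f x y)‖ with hm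
  have hmne : 0 ≤ m := norm_nonneg _
  have key : ∀ t : ℝ, 0 ≤ a + 2 * t * m + t ^ 2 * b := by
    intro t
    rcases eq_or_ne (f x y) 0 with h0 | h0
    · have : m = 0 := by simp [hm, h0]
      rw [this]; nlinarith
    · set c : ℂ := (m : ℂ) / f x y with hc
      have hcf : c * f x y = (m : ℂ) := div_mul_cancel₀ _ h0
      have habs : ‖c‖ = 1 := by
        rw [hc, norm_div, Complex.norm_real, Real.norm_eq_abs, abs_of_nonneg hmne]
        exact div_self (norm_ne_zero_iff.mpr h0)
      have hcc : (starRingEnd ℂ) c * c = 1 := by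
        rw [mul_comm, Complex.mul_conj]
        norm_cast
        simp [Complex.normSq_eq_norm_sq, habs]
      set d : ℂ := (t : ℂ) * c with hd
      have hdd : (starRingEnd ℂ) d * d = ((t ^ 2 : ℝ) : ℂ) := by
        rw [hd, map_mul, Complex.conj_ofReal]
        push_cast
        calc (t:ℂ) * (starRingEnd ℂ) c * ((t:ℂ) * c)
            = ((starRingEnd ℂ) c * c) * (t:ℂ) ^ 2 := by ring
        _ = (t:ℂ) ^ 2 := by rw [hcc, one_mul]
      have h1 : d * f x y = ((t * m : ℝ) : ℂ) := by
        rw [hd, mul_assoc, hcf]; push_cast; ring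
      have h2 : starRingEnd ℂ d * f y x = ((t * m : ℝ) : ℂ) := by
        rw [herm y x, ← map_mul, h1, Complex.conj_ofReal]
      have hexp : f (x + d • y) (x + d • y)
          = f x x + ((t * m : ℝ) : ℂ) + ((t * m : ℝ) : ℂ) + ((t ^ 2 : ℝ) : ℂ) * f y y := by
        have e1 : f (x + d • y) (x + d • y)
            = f x x + d * f x y + (starRingEnd ℂ d * f y x
              + starRingEnd ℂ d * (d * f y y)) := by
          rw [addl x (d • y) (x + d • y), addr, addr, smull, smull, smulr, smulr]
        rw [e1, h1, h2, ← mul_assoc, hdd]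
        ring
      have := pos (x + d • y)
      rw [hexp] at this
      simp only [Complex.add_re, Complex.ofReal_re, Complex.mul_re, Complex.ofReal_im,
        zero_mul, sub_zero] at this
      nlinarith [this]
  have hsq : m ^ 2 ≤ a * b := by
    rcases eq_or_lt_of_le hbne with hb0 | hb0
    · have hm0 : m = 0 := by
        by_contra hmm
        have hmpos : 0 < m := lt_of_le_of_ne hmne (Ne.symm hmm)
        have h2 : 2 * (-(a + 1) / (2 * m)) * m = -(a + 1) := by
          field_simp
        have hk := key (-(a + 1) / (2 * m))
        rw [← hb0, h2] at hk
        nlinarith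
      rw [hm0, ← hb0]; nlinarith
    · have hk := key (-m / b)
      have hexp : (a + 2 * (-m / b) * m + (-m / b) ^ 2 * b) * b = (a * b - m ^ 2) := by
        field_simp
        ring
      have h5 : 0 ≤ (a + 2 * (-m / b) * m + (-m / b) ^ 2 * b) * b := mul_nonneg hk hb0.le
      rw [hexp] at h5
      linarith
  calc m = Real.sqrt (m ^ 2) := by rw [Real.sqrt_sq hmne]
  _ ≤ Real.sqrt (a * b) := Real.sqrt_le_sqrt hsq
  _ = Real.sqrt a * Real.sqrt b := Real.sqrt_mul hane b

section basic
variable {A : H →L[ℂ] H} (hA : A.IsPositive)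
include hA

lemma aip_herm (x y : H) : (inner ℂ (A x) y : ℂ) = starRingEnd ℂ (inner ℂ (A y) x : ℂ) := by
  have h : (inner ℂ (A x) y : ℂ) = inner ℂ x (A y) := by
    exact hA.inner_left_eq_inner_right x y
  rw [h, ← inner_conj_symm]

lemma aip_re_nonneg (x : H) : 0 ≤ (inner ℂ (A x) x : ℂ).re := hA.re_inner_nonneg_left x

lemma anorm_nonneg (x : H) : 0 ≤ anorm A x := Real.sqrt_nonneg _

lemma anorm_sq (x : H) : anorm A x ^ 2 = (inner ℂ (A x) x : ℂ).re :=
  Real.sq_sqrt (aip_re_nonneg hA x)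

lemma aip_cs (x y : H) :
    ‖(inner ℂ (A x) y : ℂ)‖ ≤ anorm A x * anorm A y :=
  herm_cs (fun u v => (inner ℂ (A u) v : ℂ)) (aip_herm hA)
    (fun u v w => inner_add_right _ _ _) (fun c u v => inner_smul_right _ _ _)
    (aip_re_nonneg hA) x y

lemma aip_self_im (x : H) : (inner ℂ (A x) x : ℂ).im = 0 := by
  have := aip_herm hA x x
  have h2 := Complex.conj_eq_iff_im.mp this.symm
  exact h2

lemma aip_self_eq (x : H) : (inner ℂ (A x) x : ℂ) = ((anorm A x ^ 2 : ℝ) : ℂ) := by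
  apply Complex.ext
  · rw [anorm_sq hA, Complex.ofReal_re]
  · rw [aip_self_im hA, Complex.ofReal_im]

lemma anorm_smul (c : ℂ) (x : H) : anorm A (c • x) = ‖c‖ * anorm A x := by
  unfold anorm
  have h : (inner ℂ (A (c • x)) (c • x) : ℂ) = starRingEnd ℂ c * c * inner ℂ (A x) x := by
    rw [map_smul, inner_smul_left, inner_smul_right]; ring
  rw [h]
  have h2 : (starRingEnd ℂ c * c * (inner ℂ (A x) x : ℂ)).re
      = ‖c‖ ^ 2 * (inner ℂ (A x) x : ℂ).re := by
    rw [mul_comm (starRingEnd ℂ c) c, Complex.mul_conj, Complex.re_ofReal_mul,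
      Complex.normSq_eq_norm_sq]
  rw [h2, Real.sqrt_mul (sq_nonneg _), Real.sqrt_sq (norm_nonneg c)]

lemma exists_unit (hA0 : A ≠ 0) : ∃ x : H, anorm A x = 1 := by
  have hx : ∃ x : H, (inner ℂ (A x) x : ℂ).re ≠ 0 := by
    by_contra hcon
    push_neg at hcon
    apply hA0
    ext u
    have hzero : ∀ v : H, anorm A v = 0 := fun v => by
      unfold anorm; rw [hcon v, Real.sqrt_zero]
    have h1 : ‖(inner ℂ (A u) (A u) : ℂ)‖ ≤ 0 := by
      calc ‖(inner ℂ (A u) (A u) : ℂ)‖ ≤ anorm A u * anorm A (A u) := aip_cs hA u (A u)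
      _ = 0 := by rw [hzero u]; ring
    have h2 : (inner ℂ (A u) (A u) : ℂ) = 0 := by
      have := norm_nonneg (inner ℂ (A u) (A u) : ℂ)
      have : ‖(inner ℂ (A u) (A u) : ℂ)‖ = 0 := le_antisymm h1 this
      exact norm_eq_zero.mp this
    simpa using inner_self_eq_zero.mp h2
  obtain ⟨x, hx⟩ := hx
  have hpos : 0 < (inner ℂ (A x) x : ℂ).re := lt_of_le_of_ne (aip_re_nonneg hA x) (Ne.symm hx)
  have hax : 0 < anorm A x := Real.sqrt_pos.mpr hpos
  refine ⟨(((anorm A x)⁻¹ : ℝ) : ℂ) • x, ?_⟩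
  rw [anorm_smul hA]
  rw [Complex.norm_real, Real.norm_eq_abs, abs_of_nonneg (inv_nonneg.mpr hax.le)]
  field_simp

end basic

section sup
variable {A S T : H →L[ℂ] H} (hA : A.IsPositive)
include hA

lemma opSet_nonempty (hA0 : A ≠ 0) :
    Set.Nonempty {c : ℝ | ∃ x : H, anorm A x = 1 ∧ c = anorm A (T x)} := by
  obtain ⟨x, hx⟩ := exists_unit hA hA0
  exact ⟨anorm A (T x), x, hx, rfl⟩

lemma wSet_nonempty (hA0 : A ≠ 0) :
    Set.Nonempty {c : ℝ | ∃ x : H, anorm A x = 1 ∧ c = ‖(inner ℂ (A (T x)) x : ℂ)‖} := by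
  obtain ⟨x, hx⟩ := exists_unit hA hA0
  exact ⟨_, x, hx, rfl⟩

omit hA in
lemma opSet_bdd (hT : ABounded A T) :
    BddAbove {c : ℝ | ∃ x : H, anorm A x = 1 ∧ c = anorm A (T x)} := by
  obtain ⟨c, _, hb⟩ := hT
  refine ⟨c, ?_⟩
  rintro r ⟨x, hx, rfl⟩
  calc anorm A (T x) ≤ c * anorm A x := hb x
  _ = c := by rw [hx, mul_one]

lemma wSet_bdd (hT : ABounded A T) :
    BddAbove {c : ℝ | ∃ x : H, anorm A x = 1 ∧ c = ‖(inner ℂ (A (T x)) x : ℂ)‖} := by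
  obtain ⟨c, _, hb⟩ := hT
  refine ⟨c, ?_⟩
  rintro r ⟨x, hx, rfl⟩
  calc ‖(inner ℂ (A (T x)) x : ℂ)‖ ≤ anorm A (T x) * anorm A x := aip_cs hA (T x) x
  _ ≤ (c * anorm A x) * anorm A x := by
      apply mul_le_mul_of_nonneg_right (hb x) (anorm_nonneg hA x)
  _ = c := by rw [hx]; ring

lemma opAnorm_nonneg (hA0 : A ≠ 0) (hT : ABounded A T) : 0 ≤ opAnorm A T := by
  obtain ⟨x, hx⟩ := exists_unit hA hA0
  have hmem : anorm A (T x) ∈ {c : ℝ | ∃ y : H, anorm A y = 1 ∧ c = anorm A (T y)} :=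
    ⟨x, hx, rfl⟩
  have h := le_csSup (opSet_bdd hT) hmem
  exact le_trans (anorm_nonneg hA _) h

lemma wA_nonneg (hA0 : A ≠ 0) (hT : ABounded A T) : 0 ≤ wA A T := by
  obtain ⟨x, hx⟩ := exists_unit hA hA0
  have hmem : ‖(inner ℂ (A (T x)) x : ℂ)‖
      ∈ {c : ℝ | ∃ y : H, anorm A y = 1 ∧ c = ‖(inner ℂ (A (T y)) y : ℂ)‖} :=
    ⟨x, hx, rfl⟩
  have h := le_csSup (wSet_bdd hA hT) hmem
  exact le_trans (norm_nonneg _) h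

lemma opAnorm_le (hA0 : A ≠ 0) {M : ℝ}
    (hM : ∀ x : H, anorm A x = 1 → anorm A (T x) ≤ M) : opAnorm A T ≤ M := by
  apply csSup_le (opSet_nonempty hA hA0)
  rintro r ⟨x, hx, rfl⟩
  exact hM x hx

lemma wA_le (hA0 : A ≠ 0) {M : ℝ}
    (hM : ∀ x : H, anorm A x = 1 → ‖(inner ℂ (A (T x)) x : ℂ)‖ ≤ M) : wA A T ≤ M := by
  apply csSup_le (wSet_nonempty hA hA0)
  rintro r ⟨x, hx, rfl⟩
  exact hM x hx

lemma anorm_le_opAnorm (hA0 : A ≠ 0) (hT : ABounded A T) (x : H) :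
    anorm A (T x) ≤ opAnorm A T * anorm A x := by
  rcases eq_or_lt_of_le (anorm_nonneg hA x) with h0 | h0
  · obtain ⟨c, _, hb⟩ := hT
    have h1 : anorm A (T x) ≤ 0 := by
      have := hb x
      rw [← h0, mul_zero] at this
      exact this
    rw [← h0, mul_zero]
    exact h1
  · set u : H := (((anorm A x)⁻¹ : ℝ) : ℂ) • x with hu
    have hu1 : anorm A u = 1 := by
      rw [hu, anorm_smul hA, Complex.norm_real, Real.norm_eq_abs, abs_of_nonneg (inv_nonneg.mpr h0.le)]
      field_simp
    have hmem : anorm A (T u) ≤ opAnorm A T :=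
      le_csSup (opSet_bdd hT) ⟨u, hu1, rfl⟩
    have hTu : anorm A (T u) = (anorm A x)⁻¹ * anorm A (T x) := by
      rw [hu, map_smul, anorm_smul hA, Complex.norm_real, Real.norm_eq_abs,
        abs_of_nonneg (inv_nonneg.mpr h0.le)]
    rw [hTu] at hmem
    calc anorm A (T x) = ((anorm A x)⁻¹ * anorm A (T x)) * anorm A x := by
          field_simp
    _ ≤ opAnorm A T * anorm A x := mul_le_mul_of_nonneg_right hmem (anorm_nonneg hA x)

lemma aip_le_wA (hA0 : A ≠ 0) (hT : ABounded A T) (x : H) :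
    ‖(inner ℂ (A (T x)) x : ℂ)‖ ≤ wA A T * anorm A x ^ 2 := by
  rcases eq_or_lt_of_le (anorm_nonneg hA x) with h0 | h0
  · have h1 : ‖(inner ℂ (A (T x)) x : ℂ)‖ ≤ 0 := by
      calc ‖(inner ℂ (A (T x)) x : ℂ)‖ ≤ anorm A (T x) * anorm A x := aip_cs hA _ _
      _ = 0 := by rw [← h0, mul_zero]
    calc ‖(inner ℂ (A (T x)) x : ℂ)‖ ≤ 0 := h1
    _ ≤ wA A T * anorm A x ^ 2 := by rw [← h0]; ring_nf; simp
  · set u : H := (((anorm A x)⁻¹ : ℝ) : ℂ) • x with hu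
    have hu1 : anorm A u = 1 := by
      rw [hu, anorm_smul hA, Complex.norm_real, Real.norm_eq_abs, abs_of_nonneg (inv_nonneg.mpr h0.le)]
      field_simp
    have hmem : ‖(inner ℂ (A (T u)) u : ℂ)‖ ≤ wA A T :=
      le_csSup (wSet_bdd hA hT) ⟨u, hu1, rfl⟩
    have hval : (inner ℂ (A (T u)) u : ℂ)
        = (((anorm A x)⁻¹ ^ 2 : ℝ) : ℂ) * inner ℂ (A (T x)) x := by
      rw [hu, map_smul, map_smul, inner_smul_left, inner_smul_right, Complex.conj_ofReal]
      push_cast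
      ring
    have habs : ‖(inner ℂ (A (T u)) u : ℂ)‖
        = (anorm A x)⁻¹ ^ 2 * ‖(inner ℂ (A (T x)) x : ℂ)‖ := by
      rw [hval, norm_mul, Complex.norm_real, Real.norm_eq_abs, abs_of_nonneg (by positivity)]
    rw [habs] at hmem
    have h2 : 0 < (anorm A x)⁻¹ ^ 2 := by positivity
    calc ‖(inner ℂ (A (T x)) x : ℂ)‖
        = ((anorm A x)⁻¹ ^ 2 * ‖(inner ℂ (A (T x)) x : ℂ)‖) * anorm A x ^ 2 := by
          field_simp
    _ ≤ wA A T * anorm A x ^ 2 := mul_le_mul_of_nonneg_right hmem (sq_nonneg _)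

omit hA in
lemma abounded_mul (hS : ABounded A S) (hT : ABounded A T) : ABounded A (S * T) := by
  obtain ⟨c₁, hc₁, hb₁⟩ := hS
  obtain ⟨c₂, hc₂, hb₂⟩ := hT
  refine ⟨c₁ * c₂, mul_pos hc₁ hc₂, fun x => ?_⟩
  calc anorm A ((S * T) x) = anorm A (S (T x)) := by rw [ContinuousLinearMap.mul_apply]
  _ ≤ c₁ * anorm A (T x) := hb₁ _
  _ ≤ c₁ * (c₂ * anorm A x) := mul_le_mul_of_nonneg_left (hb₂ x) hc₁.le
  _ = c₁ * c₂ * anorm A x := by ring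

omit hA in
lemma abounded_pow (hT : ABounded A T) (n : ℕ) : ABounded A (T ^ n) := by
  induction n with
  | zero => exact ⟨1, one_pos, fun x => by simp [ContinuousLinearMap.one_apply]⟩
  | succ n ih => rw [pow_succ]; exact abounded_mul ih hT

lemma anorm_smul_apply (c : ℂ) (x : H) :
    anorm A ((c • T) x) = ‖c‖ * anorm A (T x) := by
  rw [ContinuousLinearMap.smul_apply, anorm_smul hA]

lemma abounded_smul (c : ℂ) (hT : ABounded A T) : ABounded A (c • T) := by
  obtain ⟨c₁, hc₁, hb₁⟩ := hT
  refine ⟨(‖c‖ + 1) * c₁, by positivity, fun x => ?_⟩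
  rw [anorm_smul_apply hA]
  calc ‖c‖ * anorm A (T x) ≤ ‖c‖ * (c₁ * anorm A x) :=
        mul_le_mul_of_nonneg_left (hb₁ x) (norm_nonneg c)
  _ ≤ (‖c‖ + 1) * c₁ * anorm A x := by
      have := mul_nonneg hc₁.le (anorm_nonneg hA x)
      nlinarith

lemma opAnorm_mul_le (hA0 : A ≠ 0) (hS : ABounded A S) (hT : ABounded A T) :
    opAnorm A (S * T) ≤ opAnorm A S * opAnorm A T := by
  apply opAnorm_le hA hA0
  intro x hx
  calc anorm A ((S * T) x) = anorm A (S (T x)) := by rw [ContinuousLinearMap.mul_apply]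
  _ ≤ opAnorm A S * anorm A (T x) := anorm_le_opAnorm hA hA0 hS _
  _ ≤ opAnorm A S * (opAnorm A T * anorm A x) :=
      mul_le_mul_of_nonneg_left (anorm_le_opAnorm hA hA0 hT x) (opAnorm_nonneg hA hA0 hS)
  _ = opAnorm A S * opAnorm A T := by rw [hx, mul_one]

lemma opAnorm_pow_le (hA0 : A ≠ 0) (hT : ABounded A T) (n : ℕ) (hn : 1 ≤ n) :
    opAnorm A (T ^ n) ≤ opAnorm A T ^ n := by
  induction n with
  | zero => omega
  | succ n ih =>
    rcases Nat.eq_or_lt_of_le hn with h1 | h1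
    · simp [← h1]
    · have hn' : 1 ≤ n := by omega
      calc opAnorm A (T ^ (n + 1)) = opAnorm A (T ^ n * T) := by rw [pow_succ]
      _ ≤ opAnorm A (T ^ n) * opAnorm A T := opAnorm_mul_le hA hA0 (abounded_pow hT n) hT
      _ ≤ opAnorm A T ^ n * opAnorm A T :=
          mul_le_mul_of_nonneg_right (ih hn') (opAnorm_nonneg hA hA0 hT)
      _ = opAnorm A T ^ (n + 1) := by ring

end sup

section polar
variable {A T : H →L[ℂ] H} (hA : A.IsPositive)
include hA

lemma anorm_parallelogram (x y : H) :
    anorm A (x + y) ^ 2 + anorm A (x - y) ^ 2 = 2 * anorm A x ^ 2 + 2 * anorm A y ^ 2 := by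
  have h : (inner ℂ (A (x + y)) (x + y) : ℂ) + inner ℂ (A (x - y)) (x - y)
      = 2 * inner ℂ (A x) x + 2 * inner ℂ (A y) y := by
    simp only [map_add, map_sub, inner_add_left, inner_add_right, inner_sub_left,
      inner_sub_right]
    ring
  have hre := congrArg Complex.re h
  have h2 : ((2 : ℂ) * (inner ℂ (A x) x : ℂ)).re = 2 * (inner ℂ (A x) x : ℂ).re := by
    simp [Complex.mul_re]
  have h3 : ((2 : ℂ) * (inner ℂ (A y) y : ℂ)).re = 2 * (inner ℂ (A y) y : ℂ).re := by
    simp [Complex.mul_re]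
  rw [Complex.add_re, Complex.add_re, h2, h3] at hre
  rw [anorm_sq hA, anorm_sq hA, anorm_sq hA, anorm_sq hA]
  linarith [hre]

lemma aip_pair_le (hA0 : A ≠ 0) (hT : ABounded A T) (x y : H) :
    ‖(inner ℂ (A (T y)) x : ℂ)‖ ≤ wA A T * (anorm A x ^ 2 + anorm A y ^ 2) := by
  set f : H → H → ℂ := fun u v => (inner ℂ (A (T u)) v : ℂ) with hf
  have hpol : f y x = (4 : ℂ)⁻¹ *
      (f (x + y) (x + y) + Complex.I * f (x + Complex.I • y) (x + Complex.I • y)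
        + (- f (x - y) (x - y)) + (- (Complex.I * f (x - Complex.I • y) (x - Complex.I • y)))) := by
    simp only [hf, map_add, map_sub, map_smul, inner_add_left, inner_add_right,
      inner_sub_left, inner_sub_right, inner_smul_left, inner_smul_right, Complex.conj_I]
    field_simp
    ring_nf
    simp only [Complex.I_sq]
    ring
  have tri : ∀ a b c d : ℂ, ‖(a + b + c + d)‖
      ≤ ‖a‖ + ‖b‖ + ‖c‖ + ‖d‖ := by
    intro a b c d
    calc ‖(a + b + c + d)‖ ≤ ‖(a + b + c)‖ + ‖d‖ :=
          norm_add_le _ _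
    _ ≤ (‖(a + b)‖ + ‖c‖) + ‖d‖ := by
        linarith [norm_add_le (a + b) c]
    _ ≤ ‖a‖ + ‖b‖ + ‖c‖ + ‖d‖ := by
        linarith [norm_add_le a b]
  have hb : ∀ u : H, ‖(f u u)‖ ≤ wA A T * anorm A u ^ 2 := fun u =>
    aip_le_wA hA hA0 hT u
  have hIy : anorm A (Complex.I • y) = anorm A y := by
    rw [anorm_smul hA, Complex.norm_I, one_mul]
  have hpar1 := anorm_parallelogram hA x y
  have hpar2 := anorm_parallelogram hA x (Complex.I • y)
  rw [hIy] at hpar2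
  have habs : ‖(f y x)‖ ≤ (4 : ℝ)⁻¹ *
      (‖(f (x + y) (x + y))‖ + ‖(f (x + Complex.I • y) (x + Complex.I • y))‖
        + ‖(f (x - y) (x - y))‖
        + ‖(f (x - Complex.I • y) (x - Complex.I • y))‖) := by
    rw [hpol, norm_mul]
    have h4 : ‖((4 : ℂ)⁻¹)‖ = (4 : ℝ)⁻¹ := by
      rw [norm_inv]; norm_num
    rw [h4]
    apply mul_le_mul_of_nonneg_left _ (by norm_num)
    calc ‖(f (x + y) (x + y) + Complex.I * f (x + Complex.I • y) (x + Complex.I • y)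
        + (- f (x - y) (x - y)) + (- (Complex.I * f (x - Complex.I • y) (x - Complex.I • y))))‖
        ≤ ‖(f (x + y) (x + y))‖
          + ‖(Complex.I * f (x + Complex.I • y) (x + Complex.I • y))‖
          + ‖(- f (x - y) (x - y))‖
          + ‖(- (Complex.I * f (x - Complex.I • y) (x - Complex.I • y)))‖ := tri _ _ _ _
    _ = _ := by
        rw [norm_neg, norm_neg, norm_mul, norm_mul, Complex.norm_I, one_mul, one_mul]
  have hw : 0 ≤ wA A T := wA_nonneg hA hA0 hT
  have c1 := hb (x + y)
  have c2 := hb (x + Complex.I • y)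
  have c3 := hb (x - y)
  have c4 := hb (x - Complex.I • y)
  have hsum : ‖(f (x + y) (x + y))‖ + ‖(f (x + Complex.I • y) (x + Complex.I • y))‖
      + ‖(f (x - y) (x - y))‖ + ‖(f (x - Complex.I • y) (x - Complex.I • y))‖
      ≤ wA A T * (4 * anorm A x ^ 2 + 4 * anorm A y ^ 2) := by nlinarith
  calc ‖(f y x)‖ ≤ (4:ℝ)⁻¹ * (wA A T * (4 * anorm A x ^ 2 + 4 * anorm A y ^ 2)) := by
        refine le_trans habs (mul_le_mul_of_nonneg_left hsum (by norm_num))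
  _ = wA A T * (anorm A x ^ 2 + anorm A y ^ 2) := by ring

lemma opAnorm_le_two_wA (hA0 : A ≠ 0) (hT : ABounded A T) :
    opAnorm A T ≤ 2 * wA A T := by
  apply opAnorm_le hA hA0
  intro x hx
  set t := anorm A (T x) with htdef
  rcases eq_or_lt_of_le (anorm_nonneg hA (T x)) with h0 | h0
  · rw [htdef, ← h0]
    have := wA_nonneg hA hA0 hT
    linarith
  · set u : H := (((t)⁻¹ : ℝ) : ℂ) • T x with hu
    have hu1 : anorm A u = 1 := by
      rw [hu, anorm_smul hA, Complex.norm_real, Real.norm_eq_abs, abs_of_nonneg (inv_nonneg.mpr h0.le)]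
      field_simp
    have hval : (inner ℂ (A (T x)) u : ℂ) = ((t : ℝ) : ℂ) := by
      rw [hu, inner_smul_right, aip_self_eq hA (T x)]
      rw [← htdef]
      have htne : (t : ℂ) ≠ 0 := Complex.ofReal_ne_zero.mpr (ne_of_gt h0)
      push_cast
      field_simp
    have := aip_pair_le hA hA0 hT u x
    rw [hval] at this
    rw [hu1, hx] at this
    have habs : ‖((t : ℂ))‖ = t := by
      rw [Complex.norm_real, Real.norm_eq_abs, abs_of_nonneg h0.le]
    rw [habs] at this
    linarith [this]

end polar

lemma sqrt2cs {a b c d : ℝ} (ha : 0 ≤ a) (hb : 0 ≤ b) (hc : 0 ≤ c) (hd : 0 ≤ d) :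
    Real.sqrt a * Real.sqrt c + Real.sqrt b * Real.sqrt d
      ≤ Real.sqrt (a + b) * Real.sqrt (c + d) := by
  rw [← Real.sqrt_mul ha c, ← Real.sqrt_mul hb d, ← Real.sqrt_mul (by linarith : (0:ℝ) ≤ a + b)]
  have h2 : (Real.sqrt (a*c) + Real.sqrt (b*d))^2 ≤ (a+b)*(c+d) := by
    have hac : Real.sqrt (a*c)^2 = a*c := Real.sq_sqrt (by positivity)
    have hbd : Real.sqrt (b*d)^2 = b*d := Real.sq_sqrt (by positivity)
    have hmul : Real.sqrt (a*c) * Real.sqrt (b*d) = Real.sqrt (a*d) * Real.sqrt (b*c) := by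
      rw [← Real.sqrt_mul (by positivity), ← Real.sqrt_mul (by positivity)]
      ring_nf
    have hp : Real.sqrt (a*d)^2 = a*d := Real.sq_sqrt (by positivity)
    have hq : Real.sqrt (b*c)^2 = b*c := Real.sq_sqrt (by positivity)
    nlinarith [sq_nonneg (Real.sqrt (a*d) - Real.sqrt (b*c))]
  calc Real.sqrt (a*c) + Real.sqrt (b*d)
      = Real.sqrt ((Real.sqrt (a*c) + Real.sqrt (b*d))^2) := by
        rw [Real.sqrt_sq (by positivity)]
  _ ≤ Real.sqrt ((a+b)*(c+d)) := Real.sqrt_le_sqrt h2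

section sqest
variable {A T : H →L[ℂ] H} (hA : A.IsPositive)
include hA

lemma sq_re_le (hA0 : A ≠ 0) (hT : ABounded A T) {x : H} (hx : anorm A x = 1) :
    (inner ℂ (A (T (T x))) x : ℂ).re ≤ wA A T ^ 2 := by
  set ω := wA A T with hω
  have hωn : 0 ≤ ω := wA_nonneg hA hA0 hT
  set t := anorm A (T x) with ht
  have htn : 0 ≤ t := anorm_nonneg hA _
  set F : ℝ → H → H → ℂ := fun s u v =>
    (Complex.ofReal (2*ω)) * inner ℂ (A u) v
      + (Complex.ofReal s) * ((inner ℂ (A (T u)) v : ℂ) + starRingEnd ℂ (inner ℂ (A (T v)) u : ℂ))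
    with hFdef
  have reF : ∀ (s : ℝ) (u v : H), (F s u v).re
      = 2*ω*(inner ℂ (A u) v : ℂ).re
        + s * ((inner ℂ (A (T u)) v : ℂ).re + (inner ℂ (A (T v)) u : ℂ).re) := by
    intro s u v
    simp only [hFdef, Complex.add_re, Complex.re_ofReal_mul, Complex.conj_re]
  have hsq : ∀ u : H, (inner ℂ (A u) u : ℂ).re = anorm A u ^ 2 := fun u => (anorm_sq hA u).symm
  have pos : ∀ s : ℝ, |s| ≤ 1 → ∀ u : H, 0 ≤ (F s u u).re := by
    intro s hs u
    rw [reF]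
    set z := (inner ℂ (A (T u)) u : ℂ) with hz
    set a := anorm A u ^ 2 with hadef
    have h1 : ‖z‖ ≤ ω * a := aip_le_wA hA hA0 hT u
    have h2 : |z.re| ≤ ‖z‖ := Complex.abs_re_le_norm _
    have h3 := abs_le.mp hs
    have h4 := abs_le.mp (le_trans h2 h1)
    have habs : |s * (z.re + z.re)| ≤ 2 * (ω * a) := by
      rw [abs_mul]
      calc |s| * |z.re + z.re| ≤ 1 * (2 * (ω * a)) := by
            apply mul_le_mul hs _ (abs_nonneg _) zero_le_one
            calc |z.re + z.re| ≤ |z.re| + |z.re| := abs_add_le _ _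
            _ ≤ 2 * (ω * a) := by linarith [le_trans h2 h1, abs_le.mp (le_trans h2 h1)]
      _ = 2 * (ω * a) := by ring
    have := neg_abs_le (s * (z.re + z.re))
    rw [hsq u, ← hadef]
    linarith
  have herm : ∀ (s : ℝ) (u v : H), F s u v = starRingEnd ℂ (F s v u) := by
    intro s u v
    simp only [hFdef, map_add, map_mul, Complex.conj_conj, Complex.conj_ofReal]
    rw [aip_herm hA u v]
    ring
  have addr : ∀ (s : ℝ) (u v w : H), F s u (v + w) = F s u v + F s u w := by
    intro s u v w
    simp only [hFdef, map_add, inner_add_left, inner_add_right]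
    ring
  have smulr : ∀ (s : ℝ) (c : ℂ) (u v : H), F s u (c • v) = c * F s u v := by
    intro s c u v
    simp only [hFdef, map_smul, inner_smul_left, inner_smul_right, map_mul, Complex.conj_conj]
    ring
  have key : ∀ s : ℝ, |s| ≤ 1 → ∀ u v : H, ‖(F s u v)‖
      ≤ Real.sqrt ((F s u u).re) * Real.sqrt ((F s v v).re) := fun s hs =>
    herm_cs (F s) (herm s) (addr s) (smulr s) (pos s hs)
  set β := (inner ℂ (A (T x)) x : ℂ).re with hβ
  set γ := (inner ℂ (A (T (T x))) (T x) : ℂ).re with hγ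
  set ζr := (inner ℂ (A (T (T x))) x : ℂ).re with hζ
  have rexx : (inner ℂ (A x) x : ℂ).re = 1 := by rw [hsq x, hx]; norm_num
  have rTx : (inner ℂ (A (T x)) (T x) : ℂ).re = t ^ 2 := hsq (T x)
  have d1 : (F 1 x x).re = 2*ω + 2*β := by rw [reF, rexx, ← hβ]; ring
  have dm : (F (-1) x x).re = 2*ω - 2*β := by rw [reF, rexx, ← hβ]; ring
  have D1 : (F 1 (T x) (T x)).re = 2*ω*t^2 + 2*γ := by rw [reF, rTx, ← hγ]; ring
  have Dm : (F (-1) (T x) (T x)).re = 2*ω*t^2 - 2*γ := by rw [reF, rTx, ← hγ]; ring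
  have o1 : (F 1 x (T x)).re = 2*ω*(inner ℂ (A x) (T x) : ℂ).re + (t^2 + ζr) := by
    rw [reF, rTx, ← hζ]; ring
  have om : (F (-1) x (T x)).re = 2*ω*(inner ℂ (A x) (T x) : ℂ).re - (t^2 + ζr) := by
    rw [reF, rTx, ← hζ]; ring
  have hn1 : 0 ≤ 2*ω + 2*β := by rw [← d1]; exact pos 1 (by norm_num) x
  have hn2 : 0 ≤ 2*ω - 2*β := by rw [← dm]; exact pos (-1) (by norm_num) x
  have hn3 : 0 ≤ 2*ω*t^2 + 2*γ := by rw [← D1]; exact pos 1 (by norm_num) (T x)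
  have hn4 : 0 ≤ 2*ω*t^2 - 2*γ := by rw [← Dm]; exact pos (-1) (by norm_num) (T x)
  have hP : (F 1 x (T x)).re ≤ Real.sqrt (2*ω + 2*β) * Real.sqrt (2*ω*t^2 + 2*γ) := by
    calc (F 1 x (T x)).re ≤ ‖(F 1 x (T x))‖ := Complex.re_le_norm _
    _ ≤ Real.sqrt ((F 1 x x).re) * Real.sqrt ((F 1 (T x) (T x)).re) := key 1 (by norm_num) x (T x)
    _ = _ := by rw [d1, D1]
  have hQ : -(F (-1) x (T x)).re ≤ Real.sqrt (2*ω - 2*β) * Real.sqrt (2*ω*t^2 - 2*γ) := by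
    calc -(F (-1) x (T x)).re ≤ ‖(F (-1) x (T x))‖ := by
          rw [← norm_neg, ← Complex.neg_re]
          exact Complex.re_le_norm _
    _ ≤ Real.sqrt ((F (-1) x x).re) * Real.sqrt ((F (-1) (T x) (T x)).re) :=
        key (-1) (by norm_num) x (T x)
    _ = _ := by rw [dm, Dm]
  have hcs2 := sqrt2cs hn1 hn2 hn3 hn4
  have e1 : (2*ω + 2*β) + (2*ω - 2*β) = 4*ω := by ring
  have e2 : (2*ω*t^2 + 2*γ) + (2*ω*t^2 - 2*γ) = 4*ω*t^2 := by ring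
  rw [e1, e2] at hcs2
  have e3 : Real.sqrt (4*ω) * Real.sqrt (4*ω*t^2) = 4*ω*t := by
    rw [← Real.sqrt_mul (by positivity)]
    have : 4*ω*(4*ω*t^2) = (4*ω*t)^2 := by ring
    rw [this, Real.sqrt_sq (by positivity)]
  rw [e3] at hcs2
  have hfinal : 2 * (t^2 + ζr) ≤ 4*ω*t := by
    have := hP
    have := hQ
    linarith [hP, hQ, hcs2, o1, om]
  nlinarith [sq_nonneg (ω - t), hfinal]

end sqest

section final
variable {A T : H →L[ℂ] H} (hA : A.IsPositive)
include hA

lemma wA_le_opAnorm (hA0 : A ≠ 0) (hT : ABounded A T) : wA A T ≤ opAnorm A T := by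
  apply wA_le hA hA0
  intro x hx
  calc ‖(inner ℂ (A (T x)) x : ℂ)‖ ≤ anorm A (T x) * anorm A x := aip_cs hA _ _
  _ ≤ (opAnorm A T * anorm A x) * anorm A x :=
      mul_le_mul_of_nonneg_right (anorm_le_opAnorm hA hA0 hT x) (anorm_nonneg hA x)
  _ = opAnorm A T := by rw [hx]; ring

lemma wA_smul (c : ℂ) (hc : ‖c‖ = 1) : wA A (c • T) = wA A T := by
  have hset : ∀ x : H, ‖(inner ℂ (A ((c • T) x)) x : ℂ)‖
      = ‖(inner ℂ (A (T x)) x : ℂ)‖ := by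
    intro x
    rw [ContinuousLinearMap.smul_apply, map_smul, inner_smul_left, norm_mul,
      Complex.norm_conj, hc, one_mul]
  unfold wA
  congr 1
  ext r
  constructor
  · rintro ⟨x, hx, rfl⟩; exact ⟨x, hx, (hset x)⟩
  · rintro ⟨x, hx, rfl⟩; exact ⟨x, hx, (hset x).symm⟩

lemma abs_sq_le (hA0 : A ≠ 0) (hT : ABounded A T) {x : H} (hx : anorm A x = 1) :
    ‖(inner ℂ (A (T (T x))) x : ℂ)‖ ≤ wA A T ^ 2 := by
  set ζ := (inner ℂ (A (T (T x))) x : ℂ) with hζ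
  rcases eq_or_ne ζ 0 with h0 | h0
  · rw [h0]
    simp only [norm_zero]
    positivity
  · obtain ⟨e, he⟩ := IsAlgClosed.exists_pow_nat_eq ((‖ζ‖ : ℂ) / ζ) (n := 2) two_pos
    have habs_e : ‖e‖ = 1 := by
      have h1 : ‖(e ^ 2)‖ = 1 := by
        rw [he, norm_div, Complex.norm_real, Real.norm_eq_abs, abs_of_nonneg (norm_nonneg ζ)]
        exact div_self (norm_ne_zero_iff.mpr h0)
      rw [norm_pow] at h1
      nlinarith [norm_nonneg e]
    set c := starRingEnd ℂ e with hcdef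
    have hc : ‖c‖ = 1 := by rw [hcdef, Complex.norm_conj]; exact habs_e
    have hTc : ABounded A (c • T) := abounded_smul hA c hT
    have hre := sq_re_le hA hA0 hTc hx
    rw [wA_smul hA c hc] at hre
    have hval : (inner ℂ (A ((c • T) ((c • T) x))) x : ℂ) = e ^ 2 * ζ := by
      rw [ContinuousLinearMap.smul_apply, ContinuousLinearMap.smul_apply, map_smul, map_smul,
        map_smul, inner_smul_left, inner_smul_left, hcdef, Complex.conj_conj, hζ]
      ring
    have heval : e ^ 2 * ζ = ((‖ζ‖ : ℝ) : ℂ) := by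
      rw [he]
      field_simp
    rw [hval, heval] at hre
    simpa using hre

lemma wA_mul_self_le (hA0 : A ≠ 0) (hT : ABounded A T) : wA A (T * T) ≤ wA A T ^ 2 := by
  apply wA_le hA hA0
  intro x hx
  rw [ContinuousLinearMap.mul_apply]
  exact abs_sq_le hA hA0 hT hx

lemma wA_pow_two_pow_le (hA0 : A ≠ 0) (hT : ABounded A T) (k : ℕ) :
    wA A (T ^ (2 ^ k)) ≤ wA A T ^ (2 ^ k) := by
  induction k with
  | zero => simp
  | succ k ih =>
    have hsplit : T ^ (2 ^ (k + 1)) = T ^ (2 ^ k) * T ^ (2 ^ k) := by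
      rw [pow_succ, pow_mul, sq]
    rw [hsplit]
    calc wA A (T ^ (2 ^ k) * T ^ (2 ^ k)) ≤ wA A (T ^ (2 ^ k)) ^ 2 :=
          wA_mul_self_le hA hA0 (abounded_pow hT _)
    _ ≤ (wA A T ^ (2 ^ k)) ^ 2 :=
        pow_le_pow_left₀ (wA_nonneg hA hA0 (abounded_pow hT _)) ih 2
    _ = wA A T ^ (2 ^ (k + 1)) := by rw [← pow_mul, pow_succ]

lemma rA_bddBelow (hA0 : A ≠ 0) (hT : ABounded A T) :
    BddBelow (Set.range fun n : ℕ+ => opAnorm A (T ^ (n : ℕ)) ^ (((n : ℕ) : ℝ)⁻¹)) := by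
  refine ⟨0, ?_⟩
  rintro r ⟨n, rfl⟩
  exact Real.rpow_nonneg (opAnorm_nonneg hA hA0 (abounded_pow hT _)) _

lemma rA_le_opAnorm (hA0 : A ≠ 0) (hT : ABounded A T) : rA A T ≤ opAnorm A T := by
  have h := ciInf_le (rA_bddBelow hA hA0 hT) (1 : ℕ+)
  simpa [rA] using h

lemma rA_le_wA (hA0 : A ≠ 0) (hT : ABounded A T) : rA A T ≤ wA A T := by
  set ω := wA A T with hω
  have hωn : 0 ≤ ω := wA_nonneg hA hA0 hT
  have hstep : ∀ k : ℕ, rA A T ≤ (2 : ℝ) ^ (((2 : ℝ) ^ k)⁻¹) * ω := by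
    intro k
    set n : ℕ+ := ⟨2 ^ k, pow_pos two_pos k⟩ with hn
    have h1 : rA A T ≤ opAnorm A (T ^ (2 ^ k)) ^ (((2 ^ k : ℕ) : ℝ)⁻¹) :=
      ciInf_le (rA_bddBelow hA hA0 hT) n
    have h2 : opAnorm A (T ^ (2 ^ k)) ≤ 2 * ω ^ (2 ^ k) := by
      calc opAnorm A (T ^ (2 ^ k)) ≤ 2 * wA A (T ^ (2 ^ k)) :=
            opAnorm_le_two_wA hA hA0 (abounded_pow hT _)
      _ ≤ 2 * ω ^ (2 ^ k) := by linarith [wA_pow_two_pow_le hA hA0 hT k]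
    have h3 : opAnorm A (T ^ (2 ^ k)) ^ (((2 ^ k : ℕ) : ℝ)⁻¹)
        ≤ (2 * ω ^ (2 ^ k)) ^ (((2 ^ k : ℕ) : ℝ)⁻¹) :=
      Real.rpow_le_rpow (opAnorm_nonneg hA hA0 (abounded_pow hT _)) h2 (by positivity)
    have h4 : (2 * ω ^ (2 ^ k)) ^ (((2 ^ k : ℕ) : ℝ)⁻¹)
        = (2 : ℝ) ^ (((2 : ℝ) ^ k)⁻¹) * ω := by
      have hcast : ((2 ^ k : ℕ) : ℝ) = (2 : ℝ) ^ k := by push_cast; ring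
      rw [Real.mul_rpow (by norm_num) (by positivity), hcast]
      congr 1
      rw [← Real.rpow_natCast ω (2 ^ k), ← Real.rpow_mul hωn]
      rw [hcast, mul_inv_cancel₀ (by positivity), Real.rpow_one]
    calc rA A T ≤ opAnorm A (T ^ (2 ^ k)) ^ (((2 ^ k : ℕ) : ℝ)⁻¹) := h1
    _ ≤ (2 * ω ^ (2 ^ k)) ^ (((2 ^ k : ℕ) : ℝ)⁻¹) := h3
    _ = (2 : ℝ) ^ (((2 : ℝ) ^ k)⁻¹) * ω := h4
  have hexp : Tendsto (fun k : ℕ => ((2 : ℝ) ^ k)⁻¹) atTop (nhds 0) :=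
    tendsto_inv_atTop_zero.comp (tendsto_pow_atTop_atTop_of_one_lt one_lt_two)
  have hbase : Tendsto (fun k : ℕ => (2 : ℝ) ^ (((2 : ℝ) ^ k)⁻¹)) atTop (nhds 1) := by
    have := Filter.Tendsto.rpow (tendsto_const_nhds (x := (2:ℝ)) (f := atTop)) hexp
      (Or.inl (by norm_num))
    simpa using this
  have hlim : Tendsto (fun k : ℕ => (2 : ℝ) ^ (((2 : ℝ) ^ k)⁻¹) * ω) atTop (nhds ω) := by
    have := hbase.mul_const ω
    simpa using this
  exact ge_of_tendsto hlim (Filter.Eventually.of_forall hstep)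

lemma step_eq (hA0 : A ≠ 0) {S : H →L[ℂ] H} (hS : ABounded A S)
    (heq : wA A S = opAnorm A S) :
    opAnorm A (S * S) = opAnorm A S ^ 2 ∧ wA A (S * S) = opAnorm A (S * S) := by
  set N := opAnorm A S with hN
  have hN0 : 0 ≤ N := opAnorm_nonneg hA hA0 hS
  have hSS : ABounded A (S * S) := abounded_mul hS hS
  have upper : opAnorm A (S * S) ≤ N ^ 2 := by
    have := opAnorm_mul_le hA hA0 hS hS
    nlinarith [this]
  have lower : N ^ 2 ≤ wA A (S * S) := by
    rcases eq_or_lt_of_le hN0 with h0 | h0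
    · have := wA_nonneg hA hA0 hSS
      nlinarith
    · have hgoal : ∀ ε : ℝ, 0 < ε → ε < N →
          (N - ε) ^ 2 - N * Real.sqrt (2 * N * ε) ≤ wA A (S * S) := by
        intro ε hε hεN
        have hlt : N - ε < wA A S := by rw [heq]; linarith
        obtain ⟨r, hrmem, hr⟩ := exists_lt_of_lt_csSup (wSet_nonempty hA hA0 (T := S)) hlt
        obtain ⟨x, hx, rfl⟩ := hrmem
        set μ : ℂ := starRingEnd ℂ (inner ℂ (A (S x)) x : ℂ) with hμ
        have hμabs : N - ε < ‖μ‖ := by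
          rw [hμ, Complex.norm_conj]; exact hr
        have hμN : ‖μ‖ ≤ N := by
          rw [hμ, Complex.norm_conj]
          calc ‖(inner ℂ (A (S x)) x : ℂ)‖ ≤ anorm A (S x) * anorm A x :=
                aip_cs hA _ _
          _ ≤ (N * anorm A x) * anorm A x :=
              mul_le_mul_of_nonneg_right (anorm_le_opAnorm hA hA0 hS x) (anorm_nonneg hA x)
          _ = N := by rw [hx]; ring
        have hxx : (inner ℂ (A x) x : ℂ) = 1 := by
          rw [aip_self_eq hA, hx]; norm_num
        have hμval : (inner ℂ (A x) (S x) : ℂ) = μ := by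
          rw [aip_herm hA x (S x), hμ]
        set y : H := S x - μ • x with hy
        have hSx : S x = μ • x + y := by rw [hy]; abel
        have hoxy : (inner ℂ (A x) y : ℂ) = 0 := by
          rw [hy, inner_sub_right, inner_smul_right, hμval, hxx, mul_one, sub_self]
        have t2 : anorm A (S x) ^ 2 ≤ N ^ 2 := by
          have h := anorm_le_opAnorm hA hA0 hS x
          rw [hx, mul_one] at h
          exact pow_le_pow_left₀ (anorm_nonneg hA _) h 2
        have hyy : (inner ℂ (A y) y : ℂ)
            = inner ℂ (A (S x)) (S x) - ((‖μ‖ ^ 2 : ℝ) : ℂ) := by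
          have habs2 : starRingEnd ℂ μ * μ = ((‖μ‖ ^ 2 : ℝ) : ℂ) := by
            rw [mul_comm, Complex.mul_conj, Complex.normSq_eq_norm_sq]
          rw [hy, map_sub, inner_sub_left, inner_sub_right, inner_sub_right, map_smul,
            inner_smul_left, inner_smul_right, inner_smul_left, inner_smul_right,
            hμval, hxx]
          have hμ2 : (inner ℂ (A (S x)) x : ℂ) = starRingEnd ℂ μ := by
            rw [hμ, Complex.conj_conj]
          rw [hμ2, habs2]
          ring_nf
        have hq2 : anorm A y ^ 2 ≤ 2 * N * ε := by
          have hre := congrArg Complex.re hyy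
          rw [Complex.sub_re, Complex.ofReal_re] at hre
          have h1 : anorm A y ^ 2 = (inner ℂ (A y) y : ℂ).re := anorm_sq hA y
          have h2 : anorm A (S x) ^ 2 = (inner ℂ (A (S x)) (S x) : ℂ).re := anorm_sq hA (S x)
          have hμsq : (N - ε) ^ 2 ≤ ‖μ‖ ^ 2 :=
            pow_le_pow_left₀ (by linarith) hμabs.le 2
          nlinarith [t2]
        have hqle : anorm A y ≤ Real.sqrt (2 * N * ε) := by
          have h1 : anorm A y = Real.sqrt (anorm A y ^ 2) := by
            rw [Real.sqrt_sq (anorm_nonneg hA y)]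
          rw [h1]
          exact Real.sqrt_le_sqrt hq2
        have hval : (inner ℂ (A x) (S (S x)) : ℂ) = μ ^ 2 + inner ℂ (A x) (S y) := by
          conv_lhs => rw [hSx, map_add, map_smul]
          rw [inner_add_right, inner_smul_right, hμval]
          ring
        have hSy : ‖(inner ℂ (A x) (S y) : ℂ)‖ ≤ N * Real.sqrt (2 * N * ε) := by
          calc ‖(inner ℂ (A x) (S y) : ℂ)‖ ≤ anorm A x * anorm A (S y) :=
                aip_cs hA _ _
          _ = anorm A (S y) := by rw [hx, one_mul]
          _ ≤ N * anorm A y := anorm_le_opAnorm hA hA0 hS y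
          _ ≤ N * Real.sqrt (2 * N * ε) := mul_le_mul_of_nonneg_left hqle hN0
        have hlow : (N - ε) ^ 2 - N * Real.sqrt (2 * N * ε)
            ≤ ‖(inner ℂ (A x) (S (S x)) : ℂ)‖ := by
          have htri : ‖(μ ^ 2)‖
              ≤ ‖(μ ^ 2 + inner ℂ (A x) (S y))‖ + ‖(inner ℂ (A x) (S y))‖ := by
            calc ‖(μ ^ 2)‖
                = ‖((μ ^ 2 + inner ℂ (A x) (S y)) + (- inner ℂ (A x) (S y)))‖ := by
                  ring_nf
            _ ≤ ‖(μ ^ 2 + inner ℂ (A x) (S y))‖ + ‖(- (inner ℂ (A x) (S y) : ℂ))‖ :=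
                norm_add_le _ _
            _ = ‖(μ ^ 2 + inner ℂ (A x) (S y))‖ + ‖(inner ℂ (A x) (S y) : ℂ)‖ := by
                rw [norm_neg]
          have hμ2abs : (N - ε) ^ 2 ≤ ‖(μ ^ 2)‖ := by
            rw [norm_pow]
            exact pow_le_pow_left₀ (by linarith) hμabs.le 2
          rw [hval]
          linarith
        have hmem : ‖(inner ℂ (A ((S * S) x)) x : ℂ)‖ ≤ wA A (S * S) := by
          apply le_csSup (wSet_bdd hA hSS)
          exact ⟨x, hx, rfl⟩
        have hconj : ‖(inner ℂ (A ((S * S) x)) x : ℂ)‖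
            = ‖(inner ℂ (A x) (S (S x)) : ℂ)‖ := by
          rw [ContinuousLinearMap.mul_apply, aip_herm hA _ x, Complex.norm_conj]
        rw [hconj] at hmem
        linarith
      have hcont : Tendsto (fun ε : ℝ => (N - ε) ^ 2 - N * Real.sqrt (2 * N * ε))
          (nhdsWithin 0 (Set.Ioi 0)) (nhds (N ^ 2)) := by
        have hc : Continuous (fun ε : ℝ => (N - ε) ^ 2 - N * Real.sqrt (2 * N * ε)) := by
          apply Continuous.sub
          · exact (continuous_const.sub continuous_id).pow 2
          · exact continuous_const.mul (Real.continuous_sqrt.comp (continuous_const.mul continuous_id))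
        have h2 := hc.tendsto 0
        simp only [mul_zero, sub_zero, Real.sqrt_zero] at h2
        exact h2.mono_left nhdsWithin_le_nhds
      apply le_of_tendsto hcont
      have hIoo : Set.Ioo (0:ℝ) N ∈ nhdsWithin (0:ℝ) (Set.Ioi 0) :=
        Ioo_mem_nhdsGT_of_mem ⟨le_refl 0, h0⟩
      filter_upwards [hIoo] with ε hε
      exact hgoal ε hε.1 hε.2
  have hw2 : wA A (S * S) ≤ opAnorm A (S * S) := wA_le_opAnorm hA hA0 hSS
  have h1 : opAnorm A (S * S) = N ^ 2 := le_antisymm upper (le_trans lower hw2)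
  exact ⟨h1, le_antisymm hw2 (by rw [h1]; exact lower)⟩

lemma iter_eq (hA0 : A ≠ 0) (hT : ABounded A T) (heq : wA A T = opAnorm A T) (k : ℕ) :
    opAnorm A (T ^ (2 ^ k)) = opAnorm A T ^ (2 ^ k)
      ∧ wA A (T ^ (2 ^ k)) = opAnorm A (T ^ (2 ^ k)) := by
  induction k with
  | zero => simpa using heq
  | succ k ih =>
    have hb := abounded_pow hT (2 ^ k)
    have hstep := step_eq hA hA0 hb ih.2
    have hsplit : T ^ (2 ^ (k + 1)) = T ^ (2 ^ k) * T ^ (2 ^ k) := by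
      rw [pow_succ, pow_mul, sq]
    constructor
    · rw [hsplit, hstep.1, ih.1, ← pow_mul, pow_succ]
    · rw [hsplit]
      exact hstep.2

lemma opAnorm_le_rA (hA0 : A ≠ 0) (hT : ABounded A T) (heq : wA A T = opAnorm A T) :
    opAnorm A T ≤ rA A T := by
  set N := opAnorm A T with hN
  have hN0 : 0 ≤ N := opAnorm_nonneg hA hA0 hT
  apply le_ciInf
  intro n
  rcases eq_or_lt_of_le hN0 with h0 | h0
  · rw [← h0]
    exact Real.rpow_nonneg (opAnorm_nonneg hA hA0 (abounded_pow hT _)) _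
  · set m : ℕ := (n : ℕ) with hm
    have hm1 : 1 ≤ m := n.one_le
    have hmlt : m < 2 ^ m := Nat.lt_two_pow_self
    have hkey : N ^ m ≤ opAnorm A (T ^ m) := by
      have h1 : N ^ (2 ^ m) = opAnorm A (T ^ (2 ^ m)) := (iter_eq hA hA0 hT heq m).1.symm
      have h2 : T ^ (2 ^ m) = T ^ m * T ^ (2 ^ m - m) := by
        rw [← pow_add]
        congr 1
        omega
      have h3 : opAnorm A (T ^ (2 ^ m)) ≤ opAnorm A (T ^ m) * opAnorm A (T ^ (2 ^ m - m)) := by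
        rw [h2]
        exact opAnorm_mul_le hA hA0 (abounded_pow hT _) (abounded_pow hT _)
      have h4 : opAnorm A (T ^ (2 ^ m - m)) ≤ N ^ (2 ^ m - m) :=
        opAnorm_pow_le hA hA0 hT _ (by omega)
      have h5 : N ^ (2 ^ m) ≤ opAnorm A (T ^ m) * N ^ (2 ^ m - m) := by
        calc N ^ (2 ^ m) ≤ opAnorm A (T ^ m) * opAnorm A (T ^ (2 ^ m - m)) := by
              rw [h1]; exact h3
        _ ≤ opAnorm A (T ^ m) * N ^ (2 ^ m - m) :=
            mul_le_mul_of_nonneg_left h4 (opAnorm_nonneg hA hA0 (abounded_pow hT _))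
      have hsplitpow : N ^ (2 ^ m) = N ^ m * N ^ (2 ^ m - m) := by
        rw [← pow_add]
        congr 1
        omega
      have hpos : 0 < N ^ (2 ^ m - m) := pow_pos h0 _
      rw [hsplitpow] at h5
      exact le_of_mul_le_mul_right (by linarith [h5]) hpos
    have hmne : (m : ℝ) ≠ 0 := by
      have : 0 < m := hm1
      positivity
    calc N = (N ^ m) ^ ((m : ℝ)⁻¹) := by
          rw [← Real.rpow_natCast N m, ← Real.rpow_mul hN0, mul_inv_cancel₀ hmne,
            Real.rpow_one]
    _ ≤ opAnorm A (T ^ m) ^ ((m : ℝ)⁻¹) :=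
        Real.rpow_le_rpow (pow_nonneg hN0 m) hkey (by positivity)

end final

theorem stmt_11 (A T : H →L[ℂ] H) (hA : A.IsPositive) (hA0 : A ≠ 0)
    (hT : ABounded A T) :
    (rA A T = opAnorm A T ↔ wA A T = opAnorm A T) ∧
      (rA A T = opAnorm A T → rA A T = wA A T ∧ wA A T = opAnorm A T) := by
  have hiff : rA A T = opAnorm A T ↔ wA A T = opAnorm A T := by
    constructor
    · intro h
      refine le_antisymm (wA_le_opAnorm hA hA0 hT) ?_
      calc opAnorm A T = rA A T := h.symm
      _ ≤ wA A T := rA_le_wA hA hA0 hT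
    · intro h
      exact le_antisymm (rA_le_opAnorm hA hA0 hT) (opAnorm_le_rA hA hA0 hT h)
  refine ⟨hiff, fun h => ?_⟩
  have hw := hiff.mp h
  exact ⟨by rw [h, hw], hw⟩
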